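/- Let v0 > 0, Omega_A > Omega_D > 0, S = Omega_A + Omega_D, and ell > 0. Suppose rho_alpha, rho_beta : [0, ell] → ℝ are differentiable, each satisfying v0·(1-2·rho(x))·rho'(x) = Omega_A - S·rho(x) on [0, ell], and suppose rho_alpha(x) < 1/2 < rho_beta(x) for all x ∈ [0, ell]. Let J_alpha(x) = v0·rho_alpha(x)(1 - rho_alpha(x)) and J_beta(x) = v0·rho_beta(x)(1 - rho_beta(x)). Then there exists at most one point x ∈ [0, ell] with J_alpha(x) = J_beta(x). -/

import Mathlib

/-- the fluxes of a low-density branch (`ρα < 1/2`) and a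
high-density branch (`ρβ > 1/2`) of the outer ODE coincide in at most one point
of `[0, ℓ]`. -/
theorem stmt12 (v0 ΩA ΩD ℓ : ℝ) (hv : 0 < v0) (hD : 0 < ΩD) (hAD : ΩD < ΩA)
    (hℓ : 0 < ℓ) (ρa ρb ρa' ρb' : ℝ → ℝ)
    (hda : ∀ x ∈ Set.Icc 0 ℓ, HasDerivWithinAt ρa (ρa' x) (Set.Icc 0 ℓ) x)
    (hdb : ∀ x ∈ Set.Icc 0 ℓ, HasDerivWithinAt ρb (ρb' x) (Set.Icc 0 ℓ) x)
    (hodea : ∀ x ∈ Set.Icc 0 ℓ,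
      v0 * (1 - 2 * ρa x) * ρa' x = ΩA - (ΩA + ΩD) * ρa x)
    (hodeb : ∀ x ∈ Set.Icc 0 ℓ,
      v0 * (1 - 2 * ρb x) * ρb' x = ΩA - (ΩA + ΩD) * ρb x)
    (hlt : ∀ x ∈ Set.Icc 0 ℓ, ρa x < 1 / 2 ∧ 1 / 2 < ρb x) :
    ∀ x ∈ Set.Icc 0 ℓ, ∀ y ∈ Set.Icc 0 ℓ,
      v0 * ρa x * (1 - ρa x) = v0 * ρb x * (1 - ρb x) →
      v0 * ρa y * (1 - ρa y) = v0 * ρb y * (1 - ρb y) → x = y := by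
  set f : ℝ → ℝ := fun x => v0 * ρa x * (1 - ρa x) - v0 * ρb x * (1 - ρb x) with hf
  set f' : ℝ → ℝ := fun x => (ΩA + ΩD) * (ρb x - ρa x) with hf'
  have hderiv : ∀ x ∈ Set.Icc 0 ℓ, HasDerivWithinAt f (f' x) (Set.Icc 0 ℓ) x := by
    intro x hx
    have ha := hda x hx
    have hb := hdb x hx
    have h1 : HasDerivWithinAt (fun x => v0 * ρa x * (1 - ρa x))
        (v0 * (1 - 2 * ρa x) * ρa' x) (Set.Icc 0 ℓ) x := by
      have := (((ha.const_mul v0).fun_mul ((ha.const_mul (1:ℝ)).const_sub 1)))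
      exact (this.congr_deriv (by ring)).congr (fun y _ => by ring) (by ring)
    have h2 : HasDerivWithinAt (fun x => v0 * ρb x * (1 - ρb x))
        (v0 * (1 - 2 * ρb x) * ρb' x) (Set.Icc 0 ℓ) x := by
      have := (((hb.const_mul v0).fun_mul ((hb.const_mul (1:ℝ)).const_sub 1)))
      exact (this.congr_deriv (by ring)).congr (fun y _ => by ring) (by ring)
    have := h1.fun_sub h2
    rw [hodea x hx, hodeb x hx] at this
    exact this.congr_deriv (by simp only [hf']; ring)
  have hmono : StrictMonoOn f (Set.Icc 0 ℓ) := by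
    apply strictMonoOn_of_hasDerivWithinAt_pos (convex_Icc 0 ℓ)
      (fun x hx => (hderiv x hx).continuousWithinAt)
    · intro x hx
      exact ((hderiv x (interior_subset hx)).mono interior_subset)
    · intro x hx
      have hx' := interior_subset hx
      have h := hlt x hx'
      have : 0 < ΩA + ΩD := by linarith
      have : 0 < ρb x - ρa x := by linarith [h.1, h.2]
      simp only [hf']
      positivity
  intro x hx y hy hxe hye
  exact hmono.injOn hx hy (by simp [hf]; linarith [hxe, hye])
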